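/- Two infinite paths x, y in X_B lie on the same V_B-orbit, where neither equals x_max nor x_min in forward/backward iteration through them, if x and y are cofinal (agree from some level on). Conversely if x and y are cofinal and neither orbit passes through x_max, then y = V_B^n(x) for some integer n. -/

import Mathlib

/-- There is a path of `st` edges from `v ∈ V k` to `w ∈ V (k + st)`. -/
def ReachesIn (V : ℕ → Type) (E : ℕ → Type)
    (src : ∀ n, E n → V n) (tgt : ∀ n, E n → V (n + 1)) :
    (st : ℕ) → (k : ℕ) → V k → V (k + st) → Prop
  | 0, _, v, w => v = w
  | st + 1, k, v, w =>
      ∃ e : E (k + st), tgt (k + st) e = w ∧ ReachesIn V E src tgt st k v (src (k + st) e)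

/-- `e` is the greatest element of its fiber `tgt⁻¹(tgt e)`. -/
def EdgeMaximal (V : ℕ → Type) (E : ℕ → Type) (tgt : ∀ n, E n → V (n + 1))
    (le : ∀ n, E n → E n → Prop) (n : ℕ) (e : E n) : Prop :=
  ∀ f : E n, tgt n f = tgt n e → le n f e

/-- `e` is the least element of its fiber `tgt⁻¹(tgt e)`. -/
def EdgeMinimal (V : ℕ → Type) (E : ℕ → Type) (tgt : ∀ n, E n → V (n + 1))
    (le : ∀ n, E n → E n → Prop) (n : ℕ) (e : E n) : Prop :=
  ∀ f : E n, tgt n f = tgt n e → le n e f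

/-- `f` is the successor of `e` in the linear order on the fiber `tgt⁻¹(tgt e)`. -/
def EdgeSucc (V : ℕ → Type) (E : ℕ → Type) (tgt : ∀ n, E n → V (n + 1))
    (le : ∀ n, E n → E n → Prop) (n : ℕ) (e f : E n) : Prop :=
  tgt n f = tgt n e ∧ le n e f ∧ e ≠ f ∧
    ∀ g : E n, tgt n g = tgt n e → le n e g → g ≠ e → le n f g


section VershikAux
variable {E : ℕ → Type}

/-- Reverse-lexicographic strict order on edge sequences. -/
def PLT (le : ∀ n, E n → E n → Prop) (s t : ∀ n, E n) : Prop :=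
  ∃ j, s j ≠ t j ∧ le j (s j) (t j) ∧ ∀ i, j < i → s i = t i

lemma PLT_irrefl (le : ∀ n, E n → E n → Prop) (s : ∀ n, E n) : ¬ PLT le s s :=
  fun ⟨_, h, _, _⟩ => h rfl

lemma PLT_asymm (le : ∀ n, E n → E n → Prop)
    (hantisymm : ∀ n (e f : E n), le n e f → le n f e → e = f)
    {s t : ∀ n, E n} (h1 : PLT le s t) : ¬ PLT le t s := by
  rintro ⟨j2, hne2, hle2, hab2⟩
  obtain ⟨j1, hne1, hle1, hab1⟩ := h1
  rcases lt_trichotomy j1 j2 with h | h | h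
  · exact hne2 (hab1 j2 h).symm
  · subst h; exact hne1 (hantisymm _ _ _ hle1 hle2)
  · exact hne1 (hab2 j1 h).symm

lemma PLT_trans (le : ∀ n, E n → E n → Prop)
    (hantisymm : ∀ n (e f : E n), le n e f → le n f e → e = f)
    (htrans : ∀ n (e f g : E n), le n e f → le n f g → le n e g)
    {s t u : ∀ n, E n} (h1 : PLT le s t) (h2 : PLT le t u) : PLT le s u := by
  obtain ⟨j1, hne1, hle1, hab1⟩ := h1
  obtain ⟨j2, hne2, hle2, hab2⟩ := h2
  rcases lt_trichotomy j1 j2 with h | h | h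
  · refine ⟨j2, ?_, ?_, ?_⟩
    · rw [hab1 j2 h]; exact hne2
    · rw [hab1 j2 h]; exact hle2
    · intro i hi; rw [hab1 i (h.trans hi)]; exact hab2 i hi
  · subst h
    by_cases he : s j1 = u j1
    · exfalso
      rw [← he] at hle2
      exact hne1 (hantisymm _ _ _ hle1 hle2)
    · exact ⟨j1, he, htrans _ _ _ _ hle1 hle2,
        fun i hi => (hab1 i hi).trans (hab2 i hi)⟩
  · refine ⟨j1, ?_, ?_, ?_⟩
    · rw [← hab2 j1 h]; exact hne1
    · rw [← hab2 j1 h]; exact hle1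
    · intro i hi; rw [hab1 i hi]; exact hab2 i (h.trans hi)

/-- Extract the largest differing index of two edge sequences that agree from `N` on. -/
lemma exists_maxdiff (s t : ∀ n, E n) (N : ℕ) (hN : ∀ n, N ≤ n → s n = t n)
    (hne : s ≠ t) : ∃ j, s j ≠ t j ∧ ∀ i, j < i → s i = t i := by
  classical
  have hnonempty : ((Finset.range N).filter (fun j => s j ≠ t j)).Nonempty := by
    by_contra hc
    apply hne
    funext n
    by_cases hn : N ≤ n
    · exact hN n hn
    · by_contra hsn
      exact hc ⟨n, Finset.mem_filter.mpr ⟨Finset.mem_range.mpr (by omega), hsn⟩⟩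
  set j := ((Finset.range N).filter (fun j => s j ≠ t j)).max' hnonempty with hj
  refine ⟨j, (Finset.mem_filter.mp (((Finset.range N).filter _).max'_mem hnonempty)).2, ?_⟩
  intro i hi
  by_contra hsi
  by_cases hiN : N ≤ i
  · exact hsi (hN i hiN)
  · have : i ∈ (Finset.range N).filter (fun j => s j ≠ t j) :=
      Finset.mem_filter.mpr ⟨Finset.mem_range.mpr (by omega), hsi⟩
    have := Finset.le_max' _ i this
    omega

end VershikAux

/-- Two infinite paths `x, y ∈ X_B` lie on the same `V_B`-orbit iff they
are cofinal (their edge sequences agree from some level on), provided the orbit of `x`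
does not pass through the unique maximal path `xmax`.  Here `Φ` is any bijection of `X_B`
with the defining properties of the Vershik map. -/
theorem vershik_orbit_iff_cofinal
    (V : ℕ → Type) (E : ℕ → Type)
    [∀ n, Fintype (V n)] [∀ n, Fintype (E n)]
    (src : ∀ n, E n → V n) (tgt : ∀ n, E n → V (n + 1))
    (hrange : ∀ n (v : V (n + 1)), ∃ e : E n, tgt n e = v)
    (hsource : ∀ n (v : V n), ∃ e : E n, src n e = v)
    -- the partial order on edges: a linear order on each fiber, and comparable edges
    -- have equal range
    (le : ∀ n, E n → E n → Prop)
    (hcomp : ∀ n (e f : E n), le n e f → tgt n e = tgt n f)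
    (hrefl : ∀ n (e : E n), le n e e)
    (hantisymm : ∀ n (e f : E n), le n e f → le n f e → e = f)
    (htrans : ∀ n (e f g : E n), le n e f → le n f g → le n e g)
    (htotal : ∀ n (e f : E n), tgt n e = tgt n f → le n e f ∨ le n f e)
    -- simplicity of the diagram
    (hsimple : ∃ m : ℕ → ℕ, m 0 = 0 ∧ StrictMono m ∧
      ∀ n (v : V (m n)) (w : V (m n + (m (n + 1) - m n))),
        ReachesIn V E src tgt (m (n + 1) - m n) (m n) v w)
    -- the unique maximal and minimal paths
    (xmax xmin : {x : ∀ n, E n // ∀ n, tgt n (x n) = src (n + 1) (x (n + 1))})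
    (hxmax : ∀ n, EdgeMaximal V E tgt le n (xmax.val n))
    (hxmax_unique : ∀ x : {x : ∀ n, E n // ∀ n, tgt n (x n) = src (n + 1) (x (n + 1))},
      (∀ n, EdgeMaximal V E tgt le n (x.val n)) → x = xmax)
    (hxmin : ∀ n, EdgeMinimal V E tgt le n (xmin.val n))
    (hxmin_unique : ∀ x : {x : ∀ n, E n // ∀ n, tgt n (x n) = src (n + 1) (x (n + 1))},
      (∀ n, EdgeMinimal V E tgt le n (x.val n)) → x = xmin) :
    ∀ Φ : Equiv.Perm {x : ∀ n, E n // ∀ n, tgt n (x n) = src (n + 1) (x (n + 1))},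
      Φ xmax = xmin →
      (∀ x, x ≠ xmax → ∃ k : ℕ,
        (∀ i, i < k → EdgeMaximal V E tgt le i (x.val i)) ∧
        ¬ EdgeMaximal V E tgt le k (x.val k) ∧
        EdgeSucc V E tgt le k (x.val k) ((Φ x).val k) ∧
        (∀ i, k < i → (Φ x).val i = x.val i) ∧
        (∀ i, i < k → EdgeMinimal V E tgt le i ((Φ x).val i))) →
      ∀ x y : {x : ∀ n, E n // ∀ n, tgt n (x n) = src (n + 1) (x (n + 1))},
        (∀ n : ℤ, (Φ ^ n) x ≠ xmax) →
        ((∃ n : ℤ, (Φ ^ n) x = y) ↔ ∃ N : ℕ, ∀ n, N ≤ n → x.val n = y.val n) := by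
  intro Φ hΦmax hΦ x y hx
  -- the one-step successor lemma
  have hstep : ∀ (w w' : {x : ∀ n, E n // ∀ n, tgt n (x n) = src (n + 1) (x (n + 1))}) (k : ℕ),
      (∀ i, i < k → EdgeMaximal V E tgt le i (w.val i)) →
      EdgeSucc V E tgt le k (w.val k) (w'.val k) →
      (∀ i, k < i → w'.val i = w.val i) →
      (∀ i, i < k → EdgeMinimal V E tgt le i (w'.val i)) →
      PLT le w.val w'.val ∧
        ∀ q : {x : ∀ n, E n // ∀ n, tgt n (x n) = src (n + 1) (x (n + 1))},
          PLT le w.val q.val → (w'.val = q.val ∨ PLT le w'.val q.val) := by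
    intro w w' k hkmax hsucc habove hmin
    obtain ⟨hst, hsle, hsne, hsmax⟩ := hsucc
    constructor
    · exact ⟨k, hsne, hsle, fun i hi => (habove i hi).symm⟩
    · intro q hq
      obtain ⟨j, hjne, hjle, hjab⟩ := hq
      rcases lt_trichotomy j k with hjk | hjk | hjk
      · exfalso
        have h1 : le j (q.val j) (w.val j) :=
          hkmax j hjk (q.val j) (hcomp j _ _ hjle).symm
        exact hjne (hantisymm _ _ _ hjle h1)
      · subst hjk
        have hq' : le j (w'.val j) (q.val j) :=
          hsmax (q.val j) (hcomp j _ _ hjle).symm hjle (Ne.symm hjne)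
        by_cases hqk : w'.val j = q.val j
        · by_cases heq : w'.val = q.val
          · exact Or.inl heq
          · right
            have habq : ∀ n, j ≤ n → w'.val n = q.val n := by
              intro n hn
              rcases eq_or_lt_of_le hn with rfl | hn'
              · exact hqk
              · exact (habove n hn').trans (hjab n hn')
            obtain ⟨j', hj'ne, hj'ab⟩ := exists_maxdiff w'.val q.val j habq heq
            have hj'k : j' < j := by
              by_contra hc
              exact hj'ne (habq j' (by omega))
            refine ⟨j', hj'ne, ?_, hj'ab⟩
            have htgteq : tgt j' (q.val j') = tgt j' (w'.val j') := by
              have h1 := q.property j'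
              have h2 := w'.property j'
              rw [hj'ab (j' + 1) (by omega)] at h2
              rw [h1, h2]
            exact hmin j' hj'k (q.val j') htgteq
        · exact Or.inr ⟨j, hqk, hq', fun i hi => (habove i hi).trans (hjab i hi)⟩
      · right
        refine ⟨j, ?_, ?_, ?_⟩
        · rw [habove j hjk]; exact hjne
        · rw [habove j hjk]; exact hjle
        · intro i hi; exact (habove i (hjk.trans hi)).trans (hjab i hi)
  -- comparability of cofinal paths
  have hcompar : ∀ (N : ℕ) (w q : {x : ∀ n, E n // ∀ n, tgt n (x n) = src (n + 1) (x (n + 1))}),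
      (∀ n, N ≤ n → w.val n = q.val n) → w.val ≠ q.val →
      PLT le w.val q.val ∨ PLT le q.val w.val := by
    intro N w q htails hne
    obtain ⟨j, hjne, hjab⟩ := exists_maxdiff w.val q.val N htails hne
    have htgteq : tgt j (w.val j) = tgt j (q.val j) := by
      have h1 := w.property j
      have h2 := q.property j
      rw [hjab (j + 1) (by omega)] at h1
      rw [h1, h2]
    rcases htotal j _ _ htgteq with h | h
    · exact Or.inl ⟨j, hjne, h, hjab⟩
    · exact Or.inr ⟨j, Ne.symm hjne, h, fun i hi => (hjab i hi).symm⟩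
  -- forward iterates only change finitely many coordinates
  have hmove : ∀ (m : ℕ) (z : {x : ∀ n, E n // ∀ n, tgt n (x n) = src (n + 1) (x (n + 1))}),
      (∀ j : ℤ, (Φ ^ j) z ≠ xmax) →
      ∃ N : ℕ, ∀ n, N ≤ n → z.val n = ((Φ ^ m) z).val n := by
    intro m
    induction m with
    | zero => intro z _; exact ⟨0, fun n _ => by simp⟩
    | succ m ih =>
      intro z hz
      obtain ⟨N₁, h₁⟩ := ih z hz
      have hwne : (Φ ^ m) z ≠ xmax := by
        have := hz (m : ℤ)
        rwa [zpow_natCast] at this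
      obtain ⟨k, hk1, hk2, hk3, hk4, hk5⟩ := hΦ ((Φ ^ m) z) hwne
      refine ⟨max N₁ (k + 1), fun n hn => ?_⟩
      have h2 : (Φ ^ (m + 1)) z = Φ ((Φ ^ m) z) := by
        rw [pow_succ', Equiv.Perm.mul_apply]
      rw [h2, hk4 n (by omega)]
      exact h₁ n (by omega)
  constructor
  · rintro ⟨n, rfl⟩
    rcases Int.eq_nat_or_neg n with ⟨m, rfl | rfl⟩
    · obtain ⟨N, hN⟩ := hmove m x hx
      refine ⟨N, fun n hn => ?_⟩
      rw [zpow_natCast]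
      exact hN n hn
    · have hz : ∀ j : ℤ, (Φ ^ j) ((Φ ^ (-(m : ℤ))) x) ≠ xmax := by
        intro j
        rw [← Equiv.Perm.mul_apply, ← zpow_add]
        exact hx _
      obtain ⟨N, hN⟩ := hmove m ((Φ ^ (-(m : ℤ))) x) hz
      refine ⟨N, fun n hn => ?_⟩
      have hxz : (Φ ^ m) ((Φ ^ (-(m : ℤ))) x) = x := by
        rw [← zpow_natCast Φ m, ← Equiv.Perm.mul_apply, ← zpow_add]
        simp
      have h3 := hN n hn
      rw [hxz] at h3
      exact h3.symm
  · rintro ⟨N, hN⟩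
    classical
    have hfin : ∀ P : (∀ n, E n) → Prop,
        Set.Finite {q : ∀ n, E n | P q ∧ ∀ n, N ≤ n → q n = y.val n} := by
      intro P
      apply Set.Finite.of_finite_image (f := fun q (i : Fin N) => q i)
      · exact Set.toFinite _
      · rintro q1 h1 q2 h2 hq
        funext n
        by_cases hn : n < N
        · exact congrFun hq ⟨n, hn⟩
        · exact (h1.2 n (by omega)).trans (h2.2 n (by omega)).symm
    have loopF : ∀ c : ℕ,
        ∀ w : {x : ∀ n, E n // ∀ n, tgt n (x n) = src (n + 1) (x (n + 1))},
        (∀ j : ℤ, (Φ ^ j) w ≠ xmax) →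
        (∀ n, N ≤ n → w.val n = y.val n) →
        (w = y ∨ PLT le w.val y.val) →
        {q : ∀ n, E n | PLT le w.val q ∧ ∀ n, N ≤ n → q n = y.val n}.ncard ≤ c →
        ∃ m : ℕ, (Φ ^ (m : ℤ)) w = y := by
      intro c
      induction c with
      | zero =>
        intro w hw htail hinv hcard
        rcases hinv with rfl | hplt
        · exact ⟨0, by simp⟩
        · exfalso
          have h0 : 0 < {q : ∀ n, E n | PLT le w.val q ∧ ∀ n, N ≤ n → q n = y.val n}.ncard :=
            (Set.ncard_pos (hfin _)).mpr ⟨y.val, hplt, fun n _ => rfl⟩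
          exact absurd hcard (not_le.mpr h0)
      | succ c ih =>
        intro w hw htail hinv hcard
        rcases hinv with rfl | hplt
        · exact ⟨0, by simp⟩
        · have hwne : w ≠ xmax := by
            have := hw 0; rwa [zpow_zero, Equiv.Perm.one_apply] at this
          obtain ⟨k, hk1, hk2, hk3, hk4, hk5⟩ := hΦ w hwne
          have hkN : k < N := by
            by_contra hc
            obtain ⟨j, hjne, hjle, hjab⟩ := hplt
            have hjN : j < N := by
              by_contra hc2
              exact hjne (htail j (le_of_not_gt hc2))
            have h1 : le j (y.val j) (w.val j) :=
              hk1 j (lt_of_lt_of_le hjN (le_of_not_gt hc)) (y.val j) (hcomp j _ _ hjle).symm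
            exact hjne (hantisymm _ _ _ hjle h1)
          obtain ⟨ha, hb⟩ := hstep w (Φ w) k hk1 hk3 hk4 hk5
          have htail' : ∀ n, N ≤ n → (Φ w).val n = y.val n := fun n hn =>
            (hk4 n (lt_of_lt_of_le hkN hn)).trans (htail n hn)
          have hw' : ∀ j : ℤ, (Φ ^ j) (Φ w) ≠ xmax := by
            intro j
            have h2 : (Φ ^ j) (Φ w) = (Φ ^ (j + 1)) w := by
              rw [zpow_add_one, Equiv.Perm.mul_apply]
            rw [h2]; exact hw _
          have hinv' : Φ w = y ∨ PLT le (Φ w).val y.val := by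
            rcases hb y hplt with h | h
            · exact Or.inl (Subtype.ext h)
            · exact Or.inr h
          have hsubset : {q : ∀ n, E n | PLT le (Φ w).val q ∧ ∀ n, N ≤ n → q n = y.val n} ⊆
              {q : ∀ n, E n | PLT le w.val q ∧ ∀ n, N ≤ n → q n = y.val n} := by
            rintro q ⟨h1, h2⟩
            exact ⟨PLT_trans le hantisymm htrans ha h1, h2⟩
          have hss := (Set.ssubset_iff_of_subset hsubset).mpr
            ⟨(Φ w).val, ⟨ha, htail'⟩, fun hc => PLT_irrefl le (Φ w).val hc.1⟩
          have hcard' := Set.ncard_lt_ncard hss (hfin _)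
          obtain ⟨m, hm⟩ := ih (Φ w) hw' htail' hinv' (Nat.lt_succ_iff.mp (lt_of_lt_of_le hcard' hcard))
          refine ⟨m + 1, ?_⟩
          have h2 : (Φ ^ ((m : ℤ) + 1)) w = (Φ ^ (m : ℤ)) (Φ w) := by
            rw [zpow_add_one, Equiv.Perm.mul_apply]
          rw [show ((m + 1 : ℕ) : ℤ) = (m : ℤ) + 1 by push_cast; ring, h2, hm]
    have loopB : ∀ c : ℕ,
        ∀ w : {x : ∀ n, E n // ∀ n, tgt n (x n) = src (n + 1) (x (n + 1))},
        (∀ j : ℤ, (Φ ^ j) w ≠ xmax) →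
        (∀ n, N ≤ n → w.val n = y.val n) →
        (w = y ∨ PLT le y.val w.val) →
        {q : ∀ n, E n | PLT le q w.val ∧ ∀ n, N ≤ n → q n = y.val n}.ncard ≤ c →
        ∃ m : ℕ, (Φ ^ (-(m : ℤ))) w = y := by
      intro c
      induction c with
      | zero =>
        intro w hw htail hinv hcard
        rcases hinv with rfl | hplt
        · exact ⟨0, by simp⟩
        · exfalso
          have h0 : 0 < {q : ∀ n, E n | PLT le q w.val ∧ ∀ n, N ≤ n → q n = y.val n}.ncard :=
            (Set.ncard_pos (hfin _)).mpr ⟨y.val, hplt, fun n _ => rfl⟩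
          exact absurd hcard (not_le.mpr h0)
      | succ c ih =>
        intro w hw htail hinv hcard
        rcases hinv with rfl | hplt
        · exact ⟨0, by simp⟩
        · have hwy : w ≠ y := by
            intro h; subst h; exact PLT_irrefl le w.val hplt
          have hΦu : Φ (Φ⁻¹ w) = w := Φ.apply_symm_apply w
          have hune : Φ⁻¹ w ≠ xmax := by
            have := hw (-1)
            rwa [zpow_neg_one] at this
          obtain ⟨k, hk1, hk2, hk3, hk4, hk5⟩ := hΦ (Φ⁻¹ w) hune
          rw [hΦu] at hk3 hk4 hk5
          have hkN : k < N := by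
            by_contra hc
            obtain ⟨j, hjne, hjle, hjab⟩ := hplt
            have hjN : j < N := by
              by_contra hc2
              exact hjne (htail j (le_of_not_gt hc2)).symm
            have h1 : le j (w.val j) (y.val j) :=
              hk5 j (lt_of_lt_of_le hjN (le_of_not_gt hc)) (y.val j) (hcomp j _ _ hjle)
            exact hjne (hantisymm _ _ _ hjle h1)
          obtain ⟨ha, hb⟩ := hstep (Φ⁻¹ w) w k hk1 hk3 hk4 hk5
          have htailu : ∀ n, N ≤ n → (Φ⁻¹ w).val n = y.val n := fun n hn =>
            (hk4 n (lt_of_lt_of_le hkN hn)).symm.trans (htail n hn)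
          have hwu : ∀ j : ℤ, (Φ ^ j) (Φ⁻¹ w) ≠ xmax := by
            intro j
            have h2 : (Φ ^ j) (Φ⁻¹ w) = (Φ ^ (j + -1)) w := by
              rw [zpow_add, Equiv.Perm.mul_apply, zpow_neg_one]
            rw [h2]; exact hw _
          have hinvu : Φ⁻¹ w = y ∨ PLT le y.val (Φ⁻¹ w).val := by
            by_cases huy : Φ⁻¹ w = y
            · exact Or.inl huy
            · have hne : (Φ⁻¹ w).val ≠ y.val := fun h => huy (Subtype.ext h)
              rcases hcompar N (Φ⁻¹ w) y htailu hne with h | h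
              · exfalso
                rcases hb y h with h2 | h2
                · exact hwy (Subtype.ext h2)
                · exact PLT_asymm le hantisymm hplt h2
              · exact Or.inr h
          have hsubset : {q : ∀ n, E n | PLT le q (Φ⁻¹ w).val ∧ ∀ n, N ≤ n → q n = y.val n} ⊆
              {q : ∀ n, E n | PLT le q w.val ∧ ∀ n, N ≤ n → q n = y.val n} := by
            rintro q ⟨h1, h2⟩
            exact ⟨PLT_trans le hantisymm htrans h1 ha, h2⟩
          have hss := (Set.ssubset_iff_of_subset hsubset).mpr
            ⟨(Φ⁻¹ w).val, ⟨ha, htailu⟩, fun hc => PLT_irrefl le (Φ⁻¹ w).val hc.1⟩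
          have hcard' := Set.ncard_lt_ncard hss (hfin _)
          obtain ⟨m, hm⟩ := ih (Φ⁻¹ w) hwu htailu hinvu (Nat.lt_succ_iff.mp (lt_of_lt_of_le hcard' hcard))
          refine ⟨m + 1, ?_⟩
          have h2 : (Φ ^ (-(m : ℤ) + -1)) w = (Φ ^ (-(m : ℤ))) (Φ⁻¹ w) := by
            rw [zpow_add, Equiv.Perm.mul_apply, zpow_neg_one]
          rw [show -((m + 1 : ℕ) : ℤ) = -(m : ℤ) + -1 by push_cast; ring, h2, hm]
    by_cases hxy : x = y
    · exact ⟨0, by simp [hxy]⟩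
    · have hxyv : x.val ≠ y.val := fun h => hxy (Subtype.ext h)
      rcases hcompar N x y hN hxyv with h | h
      · obtain ⟨m, hm⟩ := loopF _ x hx hN (Or.inr h) le_rfl
        exact ⟨m, hm⟩
      · obtain ⟨m, hm⟩ := loopB _ x hx hN (Or.inr h) le_rfl
        exact ⟨-(m : ℤ), hm⟩
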